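/- The Model 2 Markov chain on a finite connected graph with M ≥ 1 dollars is irreducible on the state space 𝒜_{N,M}. -/
import Mathlib


/-- The result of moving one dollar from `x` to `y` in configuration `ξ`
(nothing happens if `ξ x = 0`). -/
def moveDollar {V : Type*} [DecidableEq V] (ξ : V → ℕ) (x y : V) : V → ℕ :=
  fun z => if ξ x = 0 then ξ z
    else ξ z - (if z = x then 1 else 0) + (if z = y then 1 else 0)

/-- The state space `𝒜_{N,M}` of configurations with `M` dollars, as a finite set. -/
def stateSpace (V : Type*) [Fintype V] [DecidableEq V] (M : ℕ) : Finset (V → ℕ) :=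
  (Fintype.piFinset fun _ : V => Finset.range (M + 1)).filter fun ξ => ∑ x, ξ x = M

/-- Model 2 transition probabilities: `p(ξ, ξ^{→xy}) = ξ(x)/(M·deg(x))` for each
oriented edge `(x,y)`. -/
def pTwo {V : Type*} [Fintype V] [DecidableEq V] (G : SimpleGraph V) [DecidableRel G.Adj]
    (M : ℕ) (ξ ξ' : V → ℕ) : ℚ :=
  ∑ e ∈ Finset.univ.filter (fun e : V × V => G.Adj e.1 e.2 ∧ moveDollar ξ e.1 e.2 = ξ'),
    (ξ e.1 : ℚ) / ((M : ℚ) * (G.degree e.1 : ℚ))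

/-- `t`-step transition probabilities of Model 2. -/
def pTwoIter {V : Type*} [Fintype V] [DecidableEq V] (G : SimpleGraph V)
    [DecidableRel G.Adj] (M : ℕ) : ℕ → (V → ℕ) → (V → ℕ) → ℚ
  | 0, ξ, ξ' => if ξ = ξ' then 1 else 0
  | t + 1, ξ, ξ' => ∑ η ∈ stateSpace V M, pTwoIter G M t ξ η * pTwo G M η ξ'

section Aux

variable {V : Type*} [Fintype V] [DecidableEq V] (G : SimpleGraph V) [DecidableRel G.Adj]
variable {M : ℕ}

lemma mem_stateSpace_iff {ξ : V → ℕ} : ξ ∈ stateSpace V M ↔ ∑ x, ξ x = M := by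
  constructor
  · intro h; exact (Finset.mem_filter.1 h).2
  · intro h
    refine Finset.mem_filter.2 ⟨Fintype.mem_piFinset.2 fun x => ?_, h⟩
    rw [Finset.mem_range]
    have := Finset.single_le_sum (f := ξ) (fun i _ => Nat.zero_le _) (Finset.mem_univ x)
    omega

lemma pTwo_nonneg (ξ ξ' : V → ℕ) : 0 ≤ pTwo G M ξ ξ' := by
  refine Finset.sum_nonneg fun e _ => div_nonneg (by positivity) (by positivity)

lemma pTwoIter_nonneg (t : ℕ) (ξ ξ' : V → ℕ) : 0 ≤ pTwoIter G M t ξ ξ' := by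
  induction t generalizing ξ ξ' with
  | zero =>
    simp only [pTwoIter]
    split <;> norm_num
  | succ t ih =>
    exact Finset.sum_nonneg fun η _ => mul_nonneg (ih ξ η) (pTwo_nonneg G η ξ')

lemma pTwoIter_add (t s : ℕ) (ξ ξ' : V → ℕ) (hξ' : ξ' ∈ stateSpace V M) :
    pTwoIter G M (t + s) ξ ξ' =
      ∑ η ∈ stateSpace V M, pTwoIter G M t ξ η * pTwoIter G M s η ξ' := by
  induction s generalizing ξ' with
  | zero =>
    rw [Finset.sum_eq_single ξ']
    · simp [pTwoIter]
    · intro η _ hne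
      simp only [pTwoIter]
      rw [if_neg hne, mul_zero]
    · intro h; exact absurd hξ' h
  | succ s ih =>
    calc pTwoIter G M (t + (s + 1)) ξ ξ'
        = ∑ η ∈ stateSpace V M, pTwoIter G M (t + s) ξ η * pTwo G M η ξ' := rfl
      _ = ∑ η ∈ stateSpace V M,
            (∑ ζ ∈ stateSpace V M, pTwoIter G M t ξ ζ * pTwoIter G M s ζ η)
              * pTwo G M η ξ' :=
          Finset.sum_congr rfl fun η hη => by rw [ih η hη]
      _ = ∑ ζ ∈ stateSpace V M, pTwoIter G M t ξ ζ * pTwoIter G M (s + 1) ζ ξ' := by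
          simp only [Finset.sum_mul, mul_assoc]
          rw [Finset.sum_comm]
          refine Finset.sum_congr rfl fun ζ _ => ?_
          rw [← Finset.mul_sum]
          rfl

lemma reach_trans {ξ η ξ' : V → ℕ} (hη : η ∈ stateSpace V M) (hξ' : ξ' ∈ stateSpace V M)
    {t s : ℕ} (h1 : 0 < pTwoIter G M t ξ η) (h2 : 0 < pTwoIter G M s η ξ') :
    0 < pTwoIter G M (t + s) ξ ξ' := by
  rw [pTwoIter_add G t s ξ ξ' hξ']
  exact Finset.sum_pos'
    (fun ζ _ => mul_nonneg (pTwoIter_nonneg G t ξ ζ) (pTwoIter_nonneg G s ζ ξ'))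
    ⟨η, hη, mul_pos h1 h2⟩

lemma sum_move {ξ : V → ℕ} {x y : V} (hx : 1 ≤ ξ x) :
    ∑ z, (ξ z - (if z = x then 1 else 0) + (if z = y then 1 else 0)) = ∑ z, ξ z := by
  have h1 : ∑ z : V, (if z = x then (1 : ℕ) else 0) = 1 := by simp
  have h2 : ∑ z : V, (if z = y then (1 : ℕ) else 0) = 1 := by simp
  have h3 : ∑ z : V, (ξ z - (if z = x then 1 else 0)) + 1 = ∑ z, ξ z := by
    rw [← h1, ← Finset.sum_add_distrib]
    refine Finset.sum_congr rfl fun z _ => ?_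
    split_ifs with h
    · subst h; omega
    · omega
  rw [Finset.sum_add_distrib, h2]
  omega

lemma pTwo_step_pos (hM : 1 ≤ M) {ξ : V → ℕ} {x y : V} (hx : 0 < ξ x) (hxy : G.Adj x y) :
    0 < pTwo G M ξ (moveDollar ξ x y) := by
  unfold pTwo
  refine Finset.sum_pos'
    (fun e _ => div_nonneg (by positivity) (by positivity)) ⟨(x, y), ?_, ?_⟩
  · simp [Finset.mem_filter, hxy]
  · refine div_pos (by exact_mod_cast hx) ?_
    have hd : 0 < G.degree x := by
      rw [G.degree_pos_iff_exists_adj]; exact ⟨y, hxy⟩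
    exact mul_pos (by exact_mod_cast hM) (by exact_mod_cast hd)

lemma pTwoIter_one (ξ ξ' : V → ℕ) (hξ : ξ ∈ stateSpace V M) :
    pTwoIter G M 1 ξ ξ' = pTwo G M ξ ξ' := by
  show (∑ η ∈ stateSpace V M, pTwoIter G M 0 ξ η * pTwo G M η ξ') = _
  rw [Finset.sum_eq_single ξ]
  · simp [pTwoIter]
  · intro η _ hne
    simp only [pTwoIter]
    rw [if_neg (Ne.symm hne), zero_mul]
  · intro h; exact absurd hξ h

lemma reach_walk {x y : V} (w : G.Walk x y) :
    ∀ ξ : V → ℕ, ξ ∈ stateSpace V M → 1 ≤ M → 1 ≤ ξ x →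
    ∃ t, 0 < pTwoIter G M t ξ
      (fun z => ξ z - (if z = x then 1 else 0) + (if z = y then 1 else 0)) := by
  induction w with
  | nil =>
    intro ξ hξ hM hx
    refine ⟨0, ?_⟩
    have hfun : ∀ u : V, 1 ≤ ξ u →
        (fun z => ξ z - (if z = u then 1 else 0) + (if z = u then 1 else 0)) = ξ := by
      intro u hu
      funext z
      split_ifs with h
      · subst h; omega
      · omega
    rw [hfun _ hx]
    simp [pTwoIter]
  | @cons x b y hadj p ih =>
    intro ξ hξ hM hx
    have hxb : x ≠ b := hadj.ne
    have hξx : ξ x ≠ 0 := by omega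
    set η := moveDollar ξ x b with hηdef'
    have hηdef : ∀ z, η z = ξ z - (if z = x then 1 else 0) + (if z = b then 1 else 0) := by
      intro z; simp [hηdef', moveDollar, hξx]
    have hηS : η ∈ stateSpace V M := by
      rw [mem_stateSpace_iff] at hξ ⊢
      calc ∑ z, η z = ∑ z, (ξ z - (if z = x then 1 else 0) + (if z = b then 1 else 0)) :=
            Finset.sum_congr rfl fun z _ => hηdef z
        _ = ∑ z, ξ z := sum_move hx
        _ = M := hξ
    have hηb : 1 ≤ η b := by
      rw [hηdef b, if_pos rfl, if_neg (Ne.symm hxb)]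
      omega
    obtain ⟨t, ht⟩ := ih η hηS hM hηb
    have hstep : 0 < pTwoIter G M 1 ξ η := by
      rw [pTwoIter_one G ξ η hξ]
      exact pTwo_step_pos G hM (by omega) hadj
    have htarget : (fun z => η z - (if z = b then 1 else 0) + (if z = y then 1 else 0))
        = (fun z => ξ z - (if z = x then 1 else 0) + (if z = y then 1 else 0)) := by
      funext z
      rw [hηdef z]
      rcases eq_or_ne z x with rfl | h1
      · rw [if_pos rfl, if_neg hxb]
        rcases eq_or_ne z y with rfl | h3
        · rw [if_pos rfl]; omega
        · rw [if_neg h3]; omega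
      · rw [if_neg h1]
        rcases eq_or_ne z b with rfl | h2
        · rw [if_pos rfl]
          rcases eq_or_ne z y with rfl | h3
          · rw [if_pos rfl]; omega
          · rw [if_neg h3]; omega
        · rw [if_neg h2]
          rcases eq_or_ne z y with rfl | h3
          · rw [if_pos rfl]; omega
          · rw [if_neg h3]; omega
    rw [htarget] at ht
    have htS : (fun z => ξ z - (if z = x then 1 else 0) + (if z = y then 1 else 0))
        ∈ stateSpace V M := by
      rw [mem_stateSpace_iff] at hξ ⊢
      rw [sum_move hx, hξ]
    exact ⟨1 + t, reach_trans G hηS htS hstep ht⟩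

end Aux

/-- The Model 2 Markov chain on a finite connected graph with `M ≥ 1` dollars is
irreducible on `𝒜_{N,M}`. -/
theorem model_two_irreducible {V : Type*} [Fintype V] [DecidableEq V]
    (G : SimpleGraph V) [DecidableRel G.Adj] (hG : G.Connected) (M : ℕ) (hM : 1 ≤ M)
    (ξ ξ' : V → ℕ) (hξ : ξ ∈ stateSpace V M) (hξ' : ξ' ∈ stateSpace V M) :
    ∃ t : ℕ, 0 < pTwoIter G M t ξ ξ' := by
  have key : ∀ n : ℕ, ∀ ξ ξ' : V → ℕ, ξ ∈ stateSpace V M → ξ' ∈ stateSpace V M →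
      (∑ z, ((ξ z - ξ' z) + (ξ' z - ξ z))) = n → ∃ t, 0 < pTwoIter G M t ξ ξ' := by
    intro n
    induction n using Nat.strong_induction_on with
    | _ n ih =>
      intro ξ ξ' hξ hξ' hn
      by_cases heq : ξ = ξ'
      · subst heq
        exact ⟨0, by simp [pTwoIter]⟩
      · have hsum : ∑ z, ξ z = ∑ z, ξ' z := by
          rw [mem_stateSpace_iff] at hξ hξ'
          rw [hξ, hξ']
        have ha : ∃ a, ξ' a < ξ a := by
          by_contra h
          push_neg at h
          apply heq
          funext z
          by_contra hz
          have hlt : ξ z < ξ' z := lt_of_le_of_ne (h z) hz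
          have := Finset.sum_lt_sum (f := ξ) (g := ξ') (fun i _ => h i)
            ⟨z, Finset.mem_univ z, hlt⟩
          omega
        have hb : ∃ b, ξ b < ξ' b := by
          by_contra h
          push_neg at h
          apply heq
          funext z
          by_contra hz
          have hlt : ξ' z < ξ z := lt_of_le_of_ne (h z) (Ne.symm hz)
          have := Finset.sum_lt_sum (f := ξ') (g := ξ) (fun i _ => h i)
            ⟨z, Finset.mem_univ z, hlt⟩
          omega
        obtain ⟨a, ha⟩ := ha
        obtain ⟨b, hb⟩ := hb
        have hab : a ≠ b := by rintro rfl; omega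
        have hxa : 1 ≤ ξ a := by omega
        obtain ⟨w⟩ := hG.preconnected a b
        obtain ⟨t1, h1⟩ := reach_walk G w ξ hξ hM hxa
        set η : V → ℕ := fun z => ξ z - (if z = a then 1 else 0) + (if z = b then 1 else 0)
          with hηdef
        have hηS : η ∈ stateSpace V M := by
          rw [mem_stateSpace_iff] at hξ ⊢
          show ∑ z, (ξ z - (if z = a then 1 else 0) + (if z = b then 1 else 0)) = M
          rw [sum_move hxa, hξ]
        have hηa : η a = ξ a - 1 := by
          show (ξ a - if a = a then 1 else 0) + (if a = b then 1 else 0) = ξ a - 1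
          rw [if_pos rfl, if_neg hab]
          omega
        have hηb : η b = ξ b + 1 := by
          show (ξ b - if b = a then 1 else 0) + (if b = b then 1 else 0) = ξ b + 1
          rw [if_neg (Ne.symm hab), if_pos rfl]
          omega
        have hηz : ∀ z, z ≠ a → z ≠ b → η z = ξ z := by
          intro z h1' h2'
          show (ξ z - if z = a then 1 else 0) + (if z = b then 1 else 0) = ξ z
          rw [if_neg h1', if_neg h2']
          omega
        have hlt : (∑ z, ((η z - ξ' z) + (ξ' z - η z))) < n := by
          rw [← hn]
          refine Finset.sum_lt_sum (fun z _ => ?_) ⟨a, Finset.mem_univ a, ?_⟩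
          · rcases eq_or_ne z a with rfl | hza
            · rw [hηa]; omega
            · rcases eq_or_ne z b with rfl | hzb
              · rw [hηb]; omega
              · rw [hηz z hza hzb]
          · rw [hηa]; omega
        obtain ⟨t2, h2⟩ := ih _ hlt η ξ' hηS hξ' rfl
        exact ⟨t1 + t2, reach_trans G hηS hξ' h1 h2⟩
  exact key _ ξ ξ' hξ hξ' rfl
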